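/- (Theorem 4, Sylvester's theorem) Let R be a commutative ring, m ≥ 1, A = (a_{ij})_{1≤i,j≤m} an m×m matrix over R, and 1 ≤ r ≤ m−1. Let A_r = (a_{ij})_{1≤i,j≤r}, and for r+1 ≤ i,j ≤ m let b_{ij} be the determinant of the (r+1)×(r+1) matrix whose rows are rows 1,…,r,i of A restricted to columns 1,…,r,j (i.e., the bordered matrix with first r rows/columns those of A_r, last column entries a_{1j},…,a_{rj},a_{ij} and last row entries a_{i1},…,a_{ir},a_{ij}). Then det( (b_{ij})_{r+1≤i,j≤m} ) = (det A_r)^{m−r−1} · det A. -/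

import Mathlib

open scoped BigOperators

open Matrix

private lemma det_map_of' {R S : Type*} [CommRing R] [CommRing S] {ι : Type*}
    [DecidableEq ι] [Fintype ι] (f : R →+* S) (g : ι → ι → R) :
    f (Matrix.det (Matrix.of g)) = Matrix.det (Matrix.of fun i j => f (g i j)) := by
  rw [RingHom.map_det]; rfl

private lemma block_sylvester {K : Type*} [Field K] {r n : ℕ} (hn : 1 ≤ n)
    (P : Matrix (Fin r) (Fin r) K) (Q : Matrix (Fin r) (Fin n) K)
    (S : Matrix (Fin n) (Fin r) K) (T : Matrix (Fin n) (Fin n) K)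
    (hP : P.det ≠ 0) :
    (Matrix.of fun i j : Fin n =>
      (Matrix.fromBlocks P (Matrix.of fun s (_ : Fin 1) => Q s j)
        (Matrix.of fun (_ : Fin 1) t => S i t)
        (Matrix.of fun (_ : Fin 1) (_ : Fin 1) => T i j)).det).det
    = P.det ^ (n - 1) * (Matrix.fromBlocks P Q S T).det := by
  haveI : Invertible P := P.invertibleOfIsUnitDet (isUnit_iff_ne_zero.mpr hP)
  have hb : ∀ i j : Fin n,
      (Matrix.fromBlocks P (Matrix.of fun s (_ : Fin 1) => Q s j)
        (Matrix.of fun (_ : Fin 1) t => S i t)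
        (Matrix.of fun (_ : Fin 1) (_ : Fin 1) => T i j)).det
      = P.det * (T - S * ⅟P * Q) i j := by
    intro i j
    rw [Matrix.det_fromBlocks₁₁]
    congr 1
    rw [Matrix.det_unique]
    simp [Matrix.sub_apply, Matrix.mul_apply]
  have h1 : (Matrix.of fun i j : Fin n =>
      (Matrix.fromBlocks P (Matrix.of fun s (_ : Fin 1) => Q s j)
        (Matrix.of fun (_ : Fin 1) t => S i t)
        (Matrix.of fun (_ : Fin 1) (_ : Fin 1) => T i j)).det)
      = P.det • (T - S * ⅟P * Q) := by
    ext i j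
    simp [hb i j]
  rw [h1, Matrix.det_smul, Matrix.det_fromBlocks₁₁, Fintype.card_fin]
  obtain ⟨k, rfl⟩ : ∃ k, n = k + 1 := ⟨n - 1, by omega⟩
  simp [pow_succ]
  ring

private lemma sylvester_det_field {K : Type*} [Field K] (r m : ℕ) (hr : 1 ≤ r)
    (hrm : r + 1 ≤ m) (A : Matrix (Fin m) (Fin m) K)
    (hA : (Matrix.det (Matrix.of fun s t : Fin r =>
        A (Fin.castLE (by omega) s) (Fin.castLE (by omega) t))) ≠ 0) :
    Matrix.det (Matrix.of fun i j : Fin (m-r) =>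
      Matrix.det (Matrix.of fun s t : Fin (r+1) =>
        A (if hs : (s : ℕ) < r then ⟨s, by omega⟩
            else ⟨r + (i : ℕ), by have := i.isLt; omega⟩)
          (if ht : (t : ℕ) < r then ⟨t, by omega⟩
            else ⟨r + (j : ℕ), by have := j.isLt; omega⟩)))
    = (Matrix.det (Matrix.of fun s t : Fin r =>
        A (Fin.castLE (by omega) s) (Fin.castLE (by omega) t))) ^ (m - r - 1)
      * Matrix.det A := by
  set n := m - r with hn
  have hn1 : 1 ≤ n := by omega
  have hmn : r + n = m := by omega
  set P : Matrix (Fin r) (Fin r) K :=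
    Matrix.of fun s t => A ⟨s, by omega⟩ ⟨t, by omega⟩ with hP
  set Q : Matrix (Fin r) (Fin n) K :=
    Matrix.of fun s j => A ⟨s, by omega⟩ ⟨r + j, by have := j.isLt; omega⟩ with hQ
  set S : Matrix (Fin n) (Fin r) K :=
    Matrix.of fun i t => A ⟨r + i, by have := i.isLt; omega⟩ ⟨t, by omega⟩ with hS
  set T : Matrix (Fin n) (Fin n) K :=
    Matrix.of fun i j => A ⟨r + i, by have := i.isLt; omega⟩ ⟨r + j, by have := j.isLt; omega⟩
    with hT
  have hPeq : (Matrix.of fun s t : Fin r =>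
      A (Fin.castLE (by omega) s) (Fin.castLE (by omega) t)) = P := by
    ext s t; rfl
  have hinner : ∀ i j : Fin n,
      Matrix.det (Matrix.of fun s t : Fin (r+1) =>
        A (if hs : (s : ℕ) < r then ⟨s, by omega⟩
            else ⟨r + (i : ℕ), by have := i.isLt; omega⟩)
          (if ht : (t : ℕ) < r then ⟨t, by omega⟩
            else ⟨r + (j : ℕ), by have := j.isLt; omega⟩))
      = (Matrix.fromBlocks P (Matrix.of fun s (_ : Fin 1) => Q s j)
        (Matrix.of fun (_ : Fin 1) t => S i t)
        (Matrix.of fun (_ : Fin 1) (_ : Fin 1) => T i j)).det := by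
    intro i j
    rw [← Matrix.det_submatrix_equiv_self (finSumFinEquiv : Fin r ⊕ Fin 1 ≃ Fin (r+1))]
    congr 1
    ext st tt
    rcases st with s | s <;> rcases tt with t | t <;>
      simp [Matrix.submatrix_apply, Matrix.fromBlocks, hP, hQ, hS, hT]
  have hAeq : Matrix.det A = (Matrix.fromBlocks P Q S T).det := by
    rw [← Matrix.det_submatrix_equiv_self
      ((finSumFinEquiv : Fin r ⊕ Fin n ≃ Fin (r+n)).trans (finCongr hmn)) A]
    congr 1
    ext st tt
    rcases st with s | s <;> rcases tt with t | t <;>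
      simp [Matrix.submatrix_apply, Matrix.fromBlocks, hP, hQ, hS, hT, finCongr_apply] <;>
      (congr 1 <;> exact Fin.ext (by simp))
  have houter : (Matrix.of fun i j : Fin n =>
      Matrix.det (Matrix.of fun s t : Fin (r+1) =>
        A (if hs : (s : ℕ) < r then ⟨s, by omega⟩
            else ⟨r + (i : ℕ), by have := i.isLt; omega⟩)
          (if ht : (t : ℕ) < r then ⟨t, by omega⟩
            else ⟨r + (j : ℕ), by have := j.isLt; omega⟩)))
      = (Matrix.of fun i j : Fin n =>
      (Matrix.fromBlocks P (Matrix.of fun s (_ : Fin 1) => Q s j)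
        (Matrix.of fun (_ : Fin 1) t => S i t)
        (Matrix.of fun (_ : Fin 1) (_ : Fin 1) => T i j)).det) := by
    ext i j
    exact hinner i j
  rw [houter, hPeq, hAeq]
  exact block_sylvester hn1 P Q S T (by rw [hPeq] at hA; exact hA)

/-- Theorem 4 (Sylvester's theorem): for an `m × m` matrix `A` over a commutative ring
and `1 ≤ r ≤ m − 1`, let `b i j` (for `r+1 ≤ i, j ≤ m`, here indexed by `Fin (m-r)`)
be the determinant of the `(r+1) × (r+1)` matrix obtained from the leading `r × r`
submatrix `A_r` of `A` bordered by row `i` and column `j`.  Then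
`det (b i j) = (det A_r)^(m−r−1) · det A`. -/
theorem sylvester_det {R : Type*} [CommRing R] (m r : ℕ) (hr : 1 ≤ r) (hrm : r + 1 ≤ m)
    (A : Matrix (Fin m) (Fin m) R) :
    Matrix.det (Matrix.of fun i j : Fin (m-r) =>
      Matrix.det (Matrix.of fun s t : Fin (r+1) =>
        A (if hs : (s : ℕ) < r then ⟨s, by omega⟩
            else ⟨r + (i : ℕ), by have := i.isLt; omega⟩)
          (if ht : (t : ℕ) < r then ⟨t, by omega⟩
            else ⟨r + (j : ℕ), by have := j.isLt; omega⟩)))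
    = (Matrix.det (Matrix.of fun s t : Fin r =>
        A (Fin.castLE (by omega) s) (Fin.castLE (by omega) t))) ^ (m - r - 1)
      * Matrix.det A := by
  classical
  let K := FractionRing (MvPolynomial (Fin m × Fin m) ℤ)
  let f : MvPolynomial (Fin m × Fin m) ℤ →+* K := algebraMap (MvPolynomial (Fin m × Fin m) ℤ) K
  have hf : Function.Injective f := IsFractionRing.injective (MvPolynomial (Fin m × Fin m) ℤ) K
  -- the generic leading minor is nonzero
  have hM0 : Matrix.det (Matrix.of fun s t : Fin r =>
      (MvPolynomial.X ((Fin.castLE (by omega : r ≤ m) s), (Fin.castLE (by omega : r ≤ m) t))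
        : MvPolynomial (Fin m × Fin m) ℤ)) ≠ 0 := by
    intro h
    have h2 := congrArg (MvPolynomial.eval
      (fun p : Fin m × Fin m => if p.1 = p.2 then (1:ℤ) else 0)) h
    rw [map_zero, det_map_of'] at h2
    simp only [MvPolynomial.eval_X] at h2
    have h3 : (Matrix.of fun s t : Fin r =>
        if (Fin.castLE (by omega : r ≤ m) s, Fin.castLE (by omega : r ≤ m) t).1
          = (Fin.castLE (by omega : r ≤ m) s, Fin.castLE (by omega : r ≤ m) t).2
        then (1:ℤ) else 0) = (1 : Matrix (Fin r) (Fin r) ℤ) := by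
      ext s t
      simp [Matrix.one_apply, Fin.castLE_inj]
    rw [h3, Matrix.det_one] at h2
    exact one_ne_zero h2
  -- the generic matrix over K
  let G : Matrix (Fin m) (Fin m) K := Matrix.of fun i j => f (MvPolynomial.X (i, j))
  have hdet : (Matrix.det (Matrix.of fun s t : Fin r =>
      G (Fin.castLE (by omega) s) (Fin.castLE (by omega) t))) ≠ 0 := by
    have : (Matrix.of fun s t : Fin r =>
        G (Fin.castLE (by omega) s) (Fin.castLE (by omega) t))
        = Matrix.of fun s t : Fin r =>
          f (MvPolynomial.X (Fin.castLE (by omega : r ≤ m) s, Fin.castLE (by omega : r ≤ m) t)) :=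
      rfl
    rw [this, ← det_map_of']
    intro h
    exact hM0 (hf (by rw [h, map_zero]))
  have key := sylvester_det_field r m hr hrm G hdet
  -- transfer to the polynomial ring
  have keyσ : Matrix.det (Matrix.of fun i j : Fin (m-r) =>
      Matrix.det (Matrix.of fun s t : Fin (r+1) =>
        (MvPolynomial.X
          ((if hs : (s : ℕ) < r then (⟨s, by omega⟩ : Fin m)
            else ⟨r + (i : ℕ), by have := i.isLt; omega⟩),
           (if ht : (t : ℕ) < r then (⟨t, by omega⟩ : Fin m)
            else ⟨r + (j : ℕ), by have := j.isLt; omega⟩)) : MvPolynomial (Fin m × Fin m) ℤ)))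
    = (Matrix.det (Matrix.of fun s t : Fin r =>
        (MvPolynomial.X (Fin.castLE (by omega : r ≤ m) s, Fin.castLE (by omega : r ≤ m) t)
          : MvPolynomial (Fin m × Fin m) ℤ))) ^ (m - r - 1)
      * Matrix.det (Matrix.of fun i j : Fin m => (MvPolynomial.X (i, j) : MvPolynomial (Fin m × Fin m) ℤ)) := by
    apply hf
    simp only [_root_.map_mul, _root_.map_pow, det_map_of']
    exact key
  -- specialize to A
  let φ : MvPolynomial (Fin m × Fin m) ℤ →+* R := MvPolynomial.eval₂Hom (Int.castRingHom R) (fun p => A p.1 p.2)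
  have final := congrArg φ keyσ
  simp only [φ, _root_.map_mul, _root_.map_pow, det_map_of', MvPolynomial.eval₂Hom_X'] at final
  exact final
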